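/- Every reflection subgroup W′ of an affine Weyl group W̃ has a finite canonical set of Coxeter generators; that is, the set S′ = {s_γ : γ ∈ Φ̃⁺ with N(s_γ) ∩ W′ = {s_γ}} (Dyer's canonical generators) is finite. -/

import Mathlib

open scoped BigOperators RealInnerProductSpace

noncomputable section

/-- Word length with respect to a generating set `S` (elements of `S` are involutions
in our applications, so no inverses are needed). -/
noncomputable def wordLength {G : Type*} [Group G] (S : Set G) (g : G) : ℕ :=
  sInf {k | ∃ l : List G, l.length = k ∧ (∀ x ∈ l, x ∈ S) ∧ l.prod = g}

/-- Poincaré series (length generating function) of a subset `X` of a group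
with respect to a length function `ℓ`. -/
noncomputable def poincareSeries {G : Type*} (ℓ : G → ℕ) (X : Set G) : PowerSeries ℚ :=
  PowerSeries.mk fun m => (Nat.card {w : G // w ∈ X ∧ ℓ w = m} : ℚ)

/-- A formal power series is (the expansion of) a rational function. -/
def IsRationalPS (f : PowerSeries ℚ) : Prop :=
  ∃ p q : Polynomial ℚ, q ≠ 0 ∧ (q : PowerSeries ℚ) * f = (p : PowerSeries ℚ)

variable (n : ℕ)

abbrev Euc (n : ℕ) := EuclideanSpace ℝ (Fin n)

/-- The coroot of a vector `β`. -/
noncomputable def coroot (β : Euc n) : Euc n := (2 / ⟪β, β⟫) • β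

/-- Data of an irreducible crystallographic root system `Φ` in `ℝⁿ`, with a choice of
simple roots, positive roots, highest root, reflections, Weyl vector and
vertices of the fundamental alcove. -/
structure RootSystemData (n : ℕ) where
  n_pos : 0 < n
  Φ : Set (Euc n)
  finite' : Φ.Finite
  nonempty' : Φ.Nonempty
  zero_not_mem : (0 : Euc n) ∉ Φ
  reduced : ∀ β ∈ Φ, ∀ c : ℝ, c • β ∈ Φ → c = 1 ∨ c = -1
  crystallographic : ∀ β ∈ Φ, ∀ γ ∈ Φ, ∃ k : ℤ, ⟪coroot n β, γ⟫ = (k : ℝ)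
  spans : Submodule.span ℝ Φ = ⊤
  irreducible : ∀ Φ₁ Φ₂ : Set (Euc n), Φ = Φ₁ ∪ Φ₂ →
    (∀ β ∈ Φ₁, ∀ γ ∈ Φ₂, ⟪β, γ⟫ = 0) → Φ₁ = ∅ ∨ Φ₂ = ∅
  /-- the reflection in (the hyperplane orthogonal to) a root -/
  sRefl : Euc n → (Euc n ≃ₗ[ℝ] Euc n)
  sRefl_apply : ∀ β : Euc n, β ≠ 0 → ∀ v,
    sRefl β v = v - (2 * ⟪β, v⟫ / ⟪β, β⟫) • β
  refl_maps_roots : ∀ β ∈ Φ, ∀ γ ∈ Φ, sRefl β γ ∈ Φ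
  /-- the simple roots -/
  simpleRoot : Fin n → Euc n
  simpleRoot_mem : ∀ i, simpleRoot i ∈ Φ
  /-- the positive roots -/
  Φpos : Set (Euc n)
  pos_subset : Φpos ⊆ Φ
  pos_or_neg : ∀ β ∈ Φ, β ∈ Φpos ∨ -β ∈ Φpos
  not_pos_and_neg : ∀ β ∈ Φpos, -β ∉ Φpos
  pos_is_nat_combo : ∀ β ∈ Φpos, ∃ c : Fin n → ℕ,
    β = ∑ i, (c i : ℝ) • simpleRoot i
  /-- the highest root -/
  highestRoot : Euc n
  highestRoot_mem : highestRoot ∈ Φpos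
  highest : ∀ β ∈ Φpos, ∃ c : Fin n → ℕ,
    highestRoot - β = ∑ i, (c i : ℝ) • simpleRoot i
  /-- the Weyl vector, characterized by `(ρ, α̌ᵢ) = 1` for all simple coroots -/
  rho : Euc n
  rho_spec : ∀ i, ⟪rho, coroot n (simpleRoot i)⟫ = 1
  /-- the nonzero vertices of the fundamental alcove -/
  vertex : Fin n → Euc n
  vertex_spec : {v : Euc n | (∀ i, 0 ≤ ⟪v, simpleRoot i⟫) ∧ ⟪v, highestRoot⟫ ≤ 1}
      = convexHull ℝ (insert 0 (Set.range vertex))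

namespace RootSystemData

variable {n} (D : RootSystemData n)

/-- The finite Weyl group, as a group of linear automorphisms of `V`. -/
def Wfin : Subgroup (Euc n ≃ₗ[ℝ] Euc n) := Subgroup.closure (D.sRefl '' D.Φ)

/-- The coroot lattice `Q̌`. -/
def Qlat : AddSubgroup (Euc n) := AddSubgroup.closure (coroot n '' D.Φ)

/-- Embedding of linear automorphisms into affine automorphisms. -/
def toAff : (Euc n ≃ₗ[ℝ] Euc n) →* (Euc n ≃ᵃ[ℝ] Euc n) where
  toFun e := e.toAffineEquiv
  map_one' := rfl
  map_mul' _ _ := rfl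

/-- Translation by a vector, as an affine automorphism. -/
def trn (α : Euc n) : Euc n ≃ᵃ[ℝ] Euc n := AffineEquiv.constVAdd ℝ (Euc n) α

/-- The affine simple reflection `s₀` (reflection in the affine hyperplane `(v, θ) = 1`). -/
def s0 : Euc n ≃ᵃ[ℝ] Euc n :=
  trn (coroot n D.highestRoot) * toAff (D.sRefl D.highestRoot)

/-- The Coxeter generating set `S̃ = {s₀, s₁, …, s_n}` of the affine Weyl group. -/
def Sgen : Set (Euc n ≃ᵃ[ℝ] Euc n) :=
  (Set.range fun i => toAff (D.sRefl (D.simpleRoot i))) ∪ {D.s0}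

/-- The affine Weyl group `W̃`, as a group of affine automorphisms of `V`. -/
def AffW : Subgroup (Euc n ≃ᵃ[ℝ] Euc n) := Subgroup.closure D.Sgen

/-- The Coxeter length function on the affine Weyl group. -/
noncomputable def len : (Euc n ≃ᵃ[ℝ] Euc n) → ℕ := wordLength D.Sgen

/-- The set of reflections `T̃ = ⋃_σ σ S̃ σ⁻¹` of the affine Weyl group. -/
def Refls : Set (Euc n ≃ᵃ[ℝ] Euc n) :=
  {r | ∃ σ ∈ D.AffW, ∃ s ∈ D.Sgen, r = σ * s * σ⁻¹}

/-- The (linearized) action of an affine transformation on `Ṽ = V ⊕ ℝδ`, where the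
pair `(β, k)` represents the affine root `β + kδ`. -/
def affAct (σ : Euc n ≃ᵃ[ℝ] Euc n) (γ : Euc n × ℝ) : Euc n × ℝ :=
  (σ.linear γ.1, γ.2 - ⟪σ 0, σ.linear γ.1⟫)

/-- The affine root system `Φ̃ = {β + kδ : β ∈ Φ, k ∈ ℤ}`. -/
def AffRoots : Set (Euc n × ℝ) :=
  {γ | γ.1 ∈ D.Φ ∧ ∃ k : ℤ, γ.2 = (k : ℝ)}

/-- The positive affine roots: affine roots that are non-negative integer combinations
of the simple affine roots `α₁, …, α_n, α₀ = δ - θ`. -/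
def PosAffRoots : Set (Euc n × ℝ) :=
  {γ ∈ D.AffRoots | ∃ c₀ : ℕ, ∃ c : Fin n → ℕ,
    γ = (c₀ : ℝ) • ((-D.highestRoot, (1 : ℝ)) : Euc n × ℝ)
      + ∑ i, (c i : ℝ) • ((D.simpleRoot i, (0 : ℝ)) : Euc n × ℝ)}

/-- The reflection `s_γ` in an affine root `γ = β + kδ`. -/
noncomputable def sAff (γ : Euc n × ℝ) : Euc n ≃ᵃ[ℝ] Euc n :=
  trn (-(2 * γ.2 / ⟪γ.1, γ.1⟫) • γ.1) * toAff (D.sRefl γ.1)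

/-- `W̃_A = {σ ∈ W̃ : ℓ(σr) > ℓ(σ) for all r ∈ A}`. -/
def WA (A : Set (Euc n ≃ᵃ[ℝ] Euc n)) : Set (Euc n ≃ᵃ[ℝ] Euc n) :=
  {σ | σ ∈ D.AffW ∧ ∀ r ∈ A, D.len σ < D.len (σ * r)}

/-- The image of the finite Weyl group in the affine Weyl group. -/
def WfinAff : Subgroup (Euc n ≃ᵃ[ℝ] Euc n) := D.Wfin.map toAff

/-- `W̃₀`: the set of minimal-length right coset representatives of `W` in `W̃`. -/
def W0 : Set (Euc n ≃ᵃ[ℝ] Euc n) :=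
  {w | w ∈ D.AffW ∧ ∀ v ∈ D.WfinAff, D.len w ≤ D.len (v * w)}

/-- The closed fundamental chamber `C`. -/
def Cham : Set (Euc n) := {v | ∀ i, 0 ≤ ⟪v, D.simpleRoot i⟫}

/-- The closed fundamental alcove `A_f`. -/
def Alc : Set (Euc n) := {v ∈ D.Cham | ⟪v, D.highestRoot⟫ ≤ 1}

/-- `mᵢ(u)`: the smallest integer `≥ 0` and `≥ -(uθⱼ, αᵢ)` for all nonzero
vertices `θⱼ` of the fundamental alcove. -/
noncomputable def mi (u : Euc n ≃ₗ[ℝ] Euc n) (i : Fin n) : ℕ :=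
  Finset.univ.sup fun j => (Int.ceil (-⟪u (D.vertex j), D.simpleRoot i⟫)).toNat

/-- `des_A(w) = #{r ∈ A : ℓ(wr) < ℓ(w)}`. -/
noncomputable def desA (A : Finset (Euc n ≃ᵃ[ℝ] Euc n)) (w : Euc n ≃ᵃ[ℝ] Euc n) : ℕ :=
  (A.filter fun r => D.len (w * r) < D.len w).card

section Aux
open RootSystemData
variable {n : ℕ} (D : RootSystemData n)

local notation "V" => Euc n
local notation "AA" => (Euc n ≃ᵃ[ℝ] Euc n)

lemma aff_apply (w : AA) (v : V) : w v = w.linear v + w 0 := by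
  have := w.map_vadd 0 v
  simpa [vadd_eq_add] using this

lemma trn_apply (a v : V) : trn a v = a + v := rfl

lemma mul_apply (w u : AA) (v : V) : (w * u) v = w (u v) := rfl

lemma trn_add (a b : V) : trn (a + b) = trn a * trn b := by
  rw [AffineEquiv.mul_def]
  exact AffineEquiv.constVAdd_add (k := ℝ) (P₁ := Euc n) a b

lemma trn_zero : trn (0 : V) = (1 : AA) := AffineEquiv.constVAdd_zero ℝ (Euc n)

lemma trn_mul_neg (a : V) : trn a * trn (-a) = 1 := by
  rw [← trn_add]; simp [trn_zero]

lemma trn_neg (a : V) : trn (-a) = (trn a)⁻¹ :=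
  eq_inv_of_mul_eq_one_left (by rw [← trn_add]; simp [trn_zero])

lemma trn_linear (a : V) : (trn a : AA).linear = LinearEquiv.refl ℝ V := rfl

lemma trn_inj : Function.Injective (trn : V → AA) := by
  intro a b h
  have := congrArg (fun e : AA => e 0) h
  simpa [trn_apply] using this

lemma trn_zsmul (j : ℤ) (a : V) : trn (j • a) = (trn a)^j :=
  AffineEquiv.constVAdd_zsmul ℝ (Euc n) j a

lemma linear_mul (w u : AA) : (w * u).linear = w.linear * u.linear := rfl

lemma linear_one : ((1 : AA)).linear = 1 := rfl

lemma linear_inv (w : AA) : (w⁻¹).linear = (w.linear)⁻¹ := by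
  exact (AffineEquiv.linearHom (k := ℝ) (P₁ := Euc n)).map_inv w

lemma lin_mul_apply (L M : V ≃ₗ[ℝ] V) (v : V) : (L * M) v = L (M v) := rfl

/-- a map with trivial linear part is a translation -/
lemma eq_trn_of_linear_eq_one (w : AA) (h : w.linear = 1) : w = trn (w 0) := by
  refine AffineEquiv.ext fun v => ?_
  rw [aff_apply w v, trn_apply, h]
  show (1 : V ≃ₗ[ℝ] V) v + w 0 = w 0 + v
  simp [add_comm]

/-- conjugation of a translation -/
lemma conj_trn (w : AA) (a : V) : w * trn a * w⁻¹ = trn (w.linear a) := by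
  refine AffineEquiv.ext fun v => ?_
  rw [mul_apply, mul_apply, trn_apply, trn_apply]
  rw [aff_apply w (a + w⁻¹ v), map_add]
  have h2 : w.linear (w⁻¹ v) + w 0 = w (w⁻¹ v) := (aff_apply w _).symm
  rw [add_assoc, h2]
  have : w (w⁻¹ v) = v := by simp [AffineEquiv.inv_def]
  rw [this]

end Aux
section Aux2
open RootSystemData
variable {n : ℕ} (D : RootSystemData n)

local notation "V" => Euc n
local notation "AA" => (Euc n ≃ᵃ[ℝ] Euc n)

lemma inner_self_ne (β : V) (hβ : β ≠ 0) : ⟪β, β⟫ ≠ 0 :=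
  fun h => hβ (inner_self_eq_zero.mp h)

lemma srefl_inner (β : V) (hβ : β ≠ 0) (v w : V) :
    ⟪D.sRefl β v, D.sRefl β w⟫ = ⟪v, w⟫ := by
  have hq := inner_self_ne β hβ
  rw [D.sRefl_apply β hβ, D.sRefl_apply β hβ]
  simp only [inner_sub_left, inner_sub_right, real_inner_smul_left, real_inner_smul_right]
  rw [real_inner_comm v β, real_inner_comm w β]
  set q : ℝ := ⟪β, β⟫ with hqdef
  set a : ℝ := ⟪β, v⟫ with hadef
  set b : ℝ := ⟪β, w⟫ with hbdef
  field_simp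
  ring

lemma srefl_srefl (β : V) (hβ : β ≠ 0) (v : V) : D.sRefl β (D.sRefl β v) = v := by
  have hq := inner_self_ne β hβ
  rw [D.sRefl_apply β hβ v, D.sRefl_apply β hβ]
  have h1 : ⟪β, v - (2 * ⟪β, v⟫ / ⟪β, β⟫) • β⟫ = -⟪β, v⟫ := by
    rw [inner_sub_right, real_inner_smul_right]
    set q : ℝ := ⟪β, β⟫ with hqdef
    set a : ℝ := ⟪β, v⟫ with hadef
    field_simp
    ring
  rw [h1]
  have h2 : 2 * -⟪β, v⟫ / ⟪β, β⟫ = -(2 * ⟪β, v⟫ / ⟪β, β⟫) := by ring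
  rw [h2, neg_smul, sub_neg_eq_add, sub_add_cancel]

lemma srefl_eig (β : V) (hβ : β ≠ 0) (v : V) (h : D.sRefl β v = -v) :
    ∃ x : ℝ, v = x • β := by
  rw [D.sRefl_apply β hβ v] at h
  set a : ℝ := 2 * ⟪β, v⟫ / ⟪β, β⟫ with hadef
  refine ⟨a / 2, ?_⟩
  have h2 : (2 : ℝ) • v = a • β := by
    rw [two_smul]
    linear_combination (norm := module) h
  have h3 := congrArg (fun x => (2 : ℝ)⁻¹ • x) h2
  simp only [smul_smul] at h3
  norm_num at h3
  rw [h3]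
  congr 1
  ring

lemma srefl_beta (β : V) (hβ : β ≠ 0) : D.sRefl β β = -β := by
  have hq := inner_self_ne β hβ
  rw [D.sRefl_apply β hβ]
  have : 2 * ⟪β, β⟫ / ⟪β, β⟫ = 2 := by rw [mul_div_assoc, div_self hq]; norm_num
  rw [this, two_smul]
  abel

end Aux2
section Aux3
open RootSystemData
variable {n : ℕ} (D : RootSystemData n)

local notation "V" => Euc n
local notation "AA" => (Euc n ≃ᵃ[ℝ] Euc n)

lemma toAff_apply (e : V ≃ₗ[ℝ] V) (v : V) : (toAff (n := n) e) v = e v := rfl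

lemma toAff_linear (e : V ≃ₗ[ℝ] V) : (toAff (n := n) e : AA).linear = e := rfl

lemma hsimple_ne (i : Fin n) : D.simpleRoot i ≠ 0 :=
  fun h => D.zero_not_mem (h ▸ D.simpleRoot_mem i)

lemma hhr_ne : D.highestRoot ≠ 0 :=
  fun h => D.zero_not_mem (h ▸ D.pos_subset D.highestRoot_mem)

lemma hhr_mem : D.highestRoot ∈ D.Φ := D.pos_subset D.highestRoot_mem

lemma srefl_sq (β : V) (hβ : β ≠ 0) : D.sRefl β * D.sRefl β = 1 := by
  refine LinearEquiv.ext fun v => ?_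
  show D.sRefl β (D.sRefl β v) = v
  exact srefl_srefl D β hβ v

lemma s0_linear : D.s0.linear = D.sRefl D.highestRoot := by
  show ((trn (coroot n D.highestRoot) * toAff (n := n) (D.sRefl D.highestRoot)) : AA).linear = _
  rw [linear_mul, toAff_linear]
  rfl

lemma sgen_sq : ∀ s ∈ D.Sgen, s * s = 1 := by
  intro s hs
  rcases hs with hs | hs
  · obtain ⟨i, rfl⟩ := hs
    rw [← map_mul, srefl_sq D _ (hsimple_ne D i), map_one]
  · rcases hs with rfl
    show D.s0 * D.s0 = 1
    set α := coroot n D.highestRoot with hα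
    set u := D.sRefl D.highestRoot with hu
    have huα : u α = -α := by
      rw [hα, coroot, map_smul, hu, srefl_beta D _ (hhr_ne D), smul_neg]
    have hswap : toAff (n := n) u * trn α = trn (u α) * toAff (n := n) u := by
      have h := conj_trn (toAff (n := n) u) α
      rw [toAff_linear] at h
      calc toAff (n := n) u * trn α
          = (toAff (n := n) u * trn α * (toAff (n := n) u)⁻¹) * toAff (n := n) u := by group
        _ = trn (u α) * toAff (n := n) u := by rw [h]
    have hs0 : D.s0 = trn α * toAff (n := n) u := rfl
    calc D.s0 * D.s0 = trn α * (toAff (n := n) u * trn α) * toAff (n := n) u := by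
          rw [hs0]; group
      _ = trn α * (trn (u α) * toAff (n := n) u) * toAff (n := n) u := by rw [hswap]
      _ = (trn α * trn (u α)) * (toAff (n := n) u * toAff (n := n) u) := by group
      _ = trn (α + u α) * toAff (n := n) (u * u) := by rw [trn_add, map_mul]
      _ = 1 := by
          rw [huα, add_neg_cancel, trn_zero, hu, srefl_sq D _ (hhr_ne D), map_one, one_mul]

/-- The subgroup of affine automorphisms with orthogonal linear part stabilizing `Φ`
and translation part pairing integrally with `Φ`. -/
def Good : Subgroup AA where
  carrier := {w | (∀ v u : V, ⟪w.linear v, w.linear u⟫ = ⟪v, u⟫) ∧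
    (∀ β ∈ D.Φ, w.linear β ∈ D.Φ) ∧ (∀ β ∈ D.Φ, w.linear.symm β ∈ D.Φ) ∧
    (∀ γ ∈ D.Φ, ∃ k : ℤ, ⟪w 0, γ⟫ = (k : ℝ))}
  one_mem' := by
    refine ⟨fun v u => rfl, fun β hβ => hβ, fun β hβ => hβ, fun γ _ => ⟨0, by simp⟩⟩
  mul_mem' := by
    rintro a b ⟨ha1, ha2, ha3, ha4⟩ ⟨hb1, hb2, hb3, hb4⟩
    have hlin : (a * b).linear = a.linear * b.linear := rfl
    have hlinapp : ∀ v : V, (a * b).linear v = a.linear (b.linear v) := fun v => rfl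
    have hsymmapp : ∀ v : V, ((a * b).linear).symm v = b.linear.symm (a.linear.symm v) :=
      fun v => rfl
    refine ⟨fun v u => by rw [hlinapp, hlinapp, ha1, hb1],
      fun β hβ => by rw [hlinapp]; exact ha2 _ (hb2 _ hβ),
      fun β hβ => by rw [hsymmapp]; exact hb3 _ (ha3 _ hβ), fun γ hγ => ?_⟩
    have happ : (a * b) 0 = a.linear (b 0) + a 0 := by
      rw [mul_apply, aff_apply]
    have e1 : ⟪a.linear (b 0), γ⟫ = ⟪b 0, a.linear.symm γ⟫ := by
      conv_lhs => rw [← a.linear.apply_symm_apply γ]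
      exact ha1 _ _
    obtain ⟨k1, hk1⟩ := hb4 _ (ha3 _ hγ)
    obtain ⟨k2, hk2⟩ := ha4 γ hγ
    exact ⟨k1 + k2, by rw [happ, inner_add_left, e1, hk1, hk2]; push_cast; ring⟩
  inv_mem' := by
    rintro a ⟨ha1, ha2, ha3, ha4⟩
    have hlin : (a⁻¹).linear = a.linear.symm := rfl
    have hsymm : (a⁻¹).linear.symm = a.linear := by rw [hlin]; exact a.linear.symm_symm
    have hinner : ∀ x y : V, ⟪a.linear.symm x, y⟫ = ⟪x, a.linear y⟫ := by
      intro x y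
      conv_rhs => rw [← a.linear.apply_symm_apply x]
      exact (ha1 _ _).symm
    have hi1 : ∀ v u : V, ⟪(a⁻¹).linear v, (a⁻¹).linear u⟫ = ⟪v, u⟫ := by
      intro v u
      rw [hlin, ← ha1 (a.linear.symm v) (a.linear.symm u),
        a.linear.apply_symm_apply, a.linear.apply_symm_apply]
    refine ⟨hi1,
      fun β hβ => by rw [hlin]; exact ha3 _ hβ,
      fun β hβ => by rw [hsymm]; exact ha2 _ hβ, fun γ hγ => ?_⟩
    have h0 : a⁻¹ 0 = -(a.linear.symm (a 0)) := by
      have h1 : a (a⁻¹ 0) = (0 : V) := by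
        rw [← mul_apply, mul_inv_cancel]; rfl
      have h2 := aff_apply a (a⁻¹ 0)
      rw [h1] at h2
      have h3 : a.linear (a⁻¹ 0) = -(a 0) := by
        rw [eq_neg_iff_add_eq_zero, ← h2]
      have := congrArg a.linear.symm h3
      rwa [a.linear.symm_apply_apply, map_neg] at this
    obtain ⟨k, hk⟩ := ha4 _ (ha2 _ hγ)
    refine ⟨-k, ?_⟩
    rw [h0, inner_neg_left, hinner, hk]
    push_cast; ring

lemma affW_le_good : D.AffW ≤ Good D := by
  rw [AffW, Subgroup.closure_le]
  rintro s (⟨i, rfl⟩ | hs)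
  · have hβ := hsimple_ne D i
    have hlin : (toAff (n := n) (D.sRefl (D.simpleRoot i)) : AA).linear
        = D.sRefl (D.simpleRoot i) := rfl
    refine ⟨fun v u => by rw [hlin]; exact srefl_inner D _ hβ v u,
      fun β hβ' => by rw [hlin]; exact D.refl_maps_roots _ (D.simpleRoot_mem i) _ hβ',
      fun β hβ' => ?_, fun γ _ => ⟨0, by
        have h00 : (toAff (n := n) (D.sRefl (D.simpleRoot i))) 0 = 0 :=
          (toAff_apply _ 0).trans (map_zero _)
        rw [h00]; simp⟩⟩
    rw [hlin]
    have hsymm : (D.sRefl (D.simpleRoot i)).symm β = D.sRefl (D.simpleRoot i) β := by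
      rw [LinearEquiv.symm_apply_eq]
      exact (srefl_srefl D _ hβ β).symm
    rw [hsymm]
    exact D.refl_maps_roots _ (D.simpleRoot_mem i) _ hβ'
  · rcases hs with rfl
    have hβ := hhr_ne D
    have hlin := s0_linear D
    have h0 : D.s0 0 = coroot n D.highestRoot := by
      show (trn (coroot n D.highestRoot) * toAff (n := n) (D.sRefl D.highestRoot)) 0 = _
      rw [mul_apply, toAff_apply, map_zero, trn_apply, add_zero]
    refine ⟨fun v u => by rw [hlin]; exact srefl_inner D _ hβ v u,
      fun β hβ' => by rw [hlin]; exact D.refl_maps_roots _ (hhr_mem D) _ hβ',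
      fun β hβ' => ?_, fun γ hγ => ?_⟩
    · rw [hlin]
      have hsymm : (D.sRefl D.highestRoot).symm β = D.sRefl D.highestRoot β := by
        rw [LinearEquiv.symm_apply_eq]
        exact (srefl_srefl D _ hβ β).symm
      rw [hsymm]
      exact D.refl_maps_roots _ (hhr_mem D) _ hβ'
    · rw [h0]
      exact D.crystallographic _ (hhr_mem D) _ hγ

end Aux3
section Aux4
open RootSystemData
variable {n : ℕ} (D : RootSystemData n)

local notation "V" => Euc n
local notation "AA" => (Euc n ≃ᵃ[ℝ] Euc n)

lemma sgen_mem_affW : D.Sgen ⊆ D.AffW := Subgroup.subset_closure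

lemma refls_mem_affW : D.Refls ⊆ D.AffW := by
  rintro t ⟨σ, hσ, s, hs, rfl⟩
  exact mul_mem (mul_mem hσ (sgen_mem_affW D hs)) (inv_mem hσ)

lemma refls_sq (t : AA) (ht : t ∈ D.Refls) : t * t = 1 := by
  obtain ⟨σ, hσ, s, hs, rfl⟩ := ht
  have h := sgen_sq D s hs
  calc σ * s * σ⁻¹ * (σ * s * σ⁻¹) = σ * (s * s) * σ⁻¹ := by group
    _ = 1 := by rw [h]; group

lemma refls_inv (t : AA) (ht : t ∈ D.Refls) : t⁻¹ = t :=
  inv_eq_of_mul_eq_one_left (refls_sq D t ht)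

lemma refls_conj (w : AA) (hw : w ∈ D.AffW) (t : AA) (ht : t ∈ D.Refls) :
    w * t * w⁻¹ ∈ D.Refls := by
  obtain ⟨σ, hσ, s, hs, rfl⟩ := ht
  exact ⟨w * σ, mul_mem hw hσ, s, hs, by group⟩

lemma refls_eig (t : AA) (ht : t ∈ D.Refls) :
    ∃ γ : V, γ ≠ 0 ∧ ∀ v : V, t.linear v = -v → ∃ x : ℝ, v = x • γ := by
  obtain ⟨σ, hσ, s, hs, rfl⟩ := ht
  obtain ⟨β, hβΦ, hslin⟩ : ∃ β ∈ D.Φ, s.linear = D.sRefl β := by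
    rcases hs with ⟨i, rfl⟩ | hs
    · exact ⟨_, D.simpleRoot_mem i, rfl⟩
    · rcases hs with rfl; exact ⟨_, hhr_mem D, s0_linear D⟩
  have hβ : β ≠ 0 := fun h => D.zero_not_mem (h ▸ hβΦ)
  refine ⟨σ.linear β, fun h => hβ (by simpa using h), fun v hv => ?_⟩
  have happ : (σ * s * σ⁻¹).linear v = σ.linear (s.linear (σ.linear.symm v)) := rfl
  rw [happ] at hv
  have h2 : s.linear (σ.linear.symm v) = -(σ.linear.symm v) := by
    have := congrArg σ.linear.symm hv
    rwa [σ.linear.symm_apply_apply, map_neg] at this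
  rw [hslin] at h2
  obtain ⟨x, hx⟩ := srefl_eig D β hβ _ h2
  refine ⟨x, ?_⟩
  have := congrArg σ.linear hx
  rwa [σ.linear.apply_symm_apply, map_smul] at this

lemma prod_reverse_inv (l : List AA) (h : ∀ x ∈ l, x ∈ D.Sgen) :
    l.reverse.prod = (l.prod)⁻¹ := by
  induction l with
  | nil => simp
  | cons a l ih =>
    have ha : a⁻¹ = a := inv_eq_of_mul_eq_one_left (sgen_sq D a (h a (List.mem_cons_self)))
    rw [List.reverse_cons, List.prod_append, List.prod_cons, List.prod_cons, List.prod_nil,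
      mul_one, ih (fun x hx => h x (List.mem_cons_of_mem a hx)), mul_inv_rev, ha]

lemma exists_word (w : AA) (hw : w ∈ D.AffW) :
    ∃ l : List AA, (∀ x ∈ l, x ∈ D.Sgen) ∧ l.prod = w := by
  induction hw using Subgroup.closure_induction with
  | mem s hs => exact ⟨[s], by simp [hs]⟩
  | one => exact ⟨[], by simp⟩
  | mul a b _ _ iha ihb =>
    obtain ⟨l1, hl1, rfl⟩ := iha
    obtain ⟨l2, hl2, rfl⟩ := ihb
    exact ⟨l1 ++ l2, fun x hx => by
      rcases List.mem_append.mp hx with h | h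
      exacts [hl1 x h, hl2 x h], List.prod_append⟩
  | inv a _ iha =>
    obtain ⟨l, hl, rfl⟩ := iha
    exact ⟨l.reverse, fun x hx => hl x (List.mem_reverse.mp hx), prod_reverse_inv D l hl⟩

lemma sgen_norm_preserve (a : AA) (ha : a ∈ D.AffW) (v : V) : ‖a.linear v‖ = ‖v‖ := by
  have hg := (affW_le_good D ha).1 v v
  have h1 := real_inner_self_eq_norm_sq (a.linear v)
  have h2 := real_inner_self_eq_norm_sq v
  nlinarith [norm_nonneg (a.linear v), norm_nonneg v]

lemma s0_zero : D.s0 0 = coroot n D.highestRoot := by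
  show (trn (coroot n D.highestRoot) * toAff (n := n) (D.sRefl D.highestRoot)) 0 = _
  rw [mul_apply, toAff_apply, map_zero, trn_apply, add_zero]

lemma word_norm_bound (l : List AA) (h : ∀ x ∈ l, x ∈ D.Sgen) :
    ‖(l.prod) 0‖ ≤ l.length * ‖coroot n D.highestRoot‖ := by
  induction l with
  | nil => simp
  | cons a l ih =>
    have ha := h a (List.mem_cons_self)
    have hrest : ∀ x ∈ l, x ∈ D.Sgen := fun x hx => h x (List.mem_cons_of_mem a hx)
    have h0 : ‖a 0‖ ≤ ‖coroot n D.highestRoot‖ := by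
      rcases ha with ⟨i, rfl⟩ | ha'
      · have h00 : (toAff (n := n) (D.sRefl (D.simpleRoot i))) 0 = 0 :=
          (toAff_apply _ 0).trans (map_zero _)
        rw [h00, norm_zero]
        exact norm_nonneg _
      · rcases ha' with rfl
        rw [s0_zero D]
    rw [List.prod_cons, mul_apply, aff_apply]
    calc ‖a.linear (l.prod 0) + a 0‖ ≤ ‖a.linear (l.prod 0)‖ + ‖a 0‖ := norm_add_le _ _
      _ ≤ l.length * ‖coroot n D.highestRoot‖ + ‖coroot n D.highestRoot‖ := by
          rw [sgen_norm_preserve D a (sgen_mem_affW D ha)]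
          exact add_le_add (ih hrest) h0
      _ = (a :: l).length * ‖coroot n D.highestRoot‖ := by
          rw [List.length_cons]; push_cast; ring

lemma len_lower (w : AA) (hw : w ∈ D.AffW) :
    ‖w 0‖ ≤ (D.len w) * ‖coroot n D.highestRoot‖ := by
  obtain ⟨l, hl, hp⟩ := exists_word D w hw
  have hne : {k | ∃ l : List AA, l.length = k ∧ (∀ x ∈ l, x ∈ D.Sgen) ∧ l.prod = w}.Nonempty :=
    ⟨l.length, l, rfl, hl, hp⟩
  obtain ⟨l', hlen, hl', hp'⟩ := Nat.sInf_mem hne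
  have hlw : D.len w = l'.length := hlen.symm
  rw [hlw, ← hp']
  exact word_norm_bound D l' hl'

end Aux4
section Aux5
open RootSystemData
variable {n : ℕ} (D : RootSystemData n)

local notation "V" => Euc n
local notation "AA" => (Euc n ≃ᵃ[ℝ] Euc n)

lemma inner_zero_span (x : V) (h : ∀ γ ∈ D.Φ, ⟪x, γ⟫ = 0) : x = 0 := by
  have hspan : ∀ w ∈ Submodule.span ℝ D.Φ, ⟪x, w⟫ = 0 := by
    intro w hw
    induction hw using Submodule.span_induction with
    | mem w hw => exact h w hw
    | zero => exact inner_zero_right x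
    | add a b _ _ ha hb => rw [inner_add_right, ha, hb, add_zero]
    | smul c a _ ha => rw [real_inner_smul_right, ha, mul_zero]
  have hx : x ∈ Submodule.span ℝ D.Φ := D.spans ▸ Submodule.mem_top
  exact inner_self_eq_zero.mp (hspan x hx)

lemma finite_linear : Set.Finite {L : V ≃ₗ[ℝ] V | ∀ β ∈ D.Φ, L β ∈ D.Φ} := by
  classical
  have hΦ : D.Φ.Finite := D.finite'
  set S := {L : V ≃ₗ[ℝ] V | ∀ β ∈ D.Φ, L β ∈ D.Φ}
  have hfin : Finite ↥(hΦ.toFinset) := inferInstance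
  apply Set.Finite.of_finite_image (f := fun (L : V ≃ₗ[ℝ] V) (β : ↥(hΦ.toFinset)) => L β.val)
  · apply Set.Finite.subset (Set.Finite.pi (t := fun _ : ↥(hΦ.toFinset) => D.Φ) fun _ => hΦ)
    rintro y ⟨L, hL, rfl⟩
    intro β _
    exact hL β.val (hΦ.mem_toFinset.mp β.2)
  · intro L hL M hM hLM
    have heq : ∀ β ∈ D.Φ, L β = M β := by
      intro β hβ
      exact congrFun hLM ⟨β, hΦ.mem_toFinset.mpr hβ⟩
    apply LinearEquiv.toLinearMap_injective
    apply LinearMap.ext_on (s := D.Φ) (by rw [D.spans])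
    exact heq

lemma finite_ball (c : ℝ) :
    Set.Finite {μ : V | (∀ γ ∈ D.Φ, ∃ k : ℤ, ⟪μ, γ⟫ = (k : ℝ)) ∧ ‖μ‖ ≤ c} := by
  classical
  have hΦ : D.Φ.Finite := D.finite'
  apply Set.Finite.of_finite_image
    (f := fun (μ : V) (γ : ↥(hΦ.toFinset)) => round (⟪μ, γ.val⟫ : ℝ))
  · apply Set.Finite.subset (Set.Finite.pi
      (t := fun γ : ↥(hΦ.toFinset) => Set.Icc (-(Int.ceil (c * ‖γ.val‖))) (Int.ceil (c * ‖γ.val‖)))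
      fun _ => Set.finite_Icc _ _)
    rintro y ⟨μ, ⟨hint, hnorm⟩, rfl⟩
    intro γ _
    obtain ⟨k, hk⟩ := hint γ.val (hΦ.mem_toFinset.mp γ.2)
    have hr : round (⟪μ, γ.val⟫ : ℝ) = k := by rw [hk]; exact round_intCast k
    have habs : |(k : ℝ)| ≤ c * ‖γ.val‖ := by
      rw [← hk]
      calc |(⟪μ, γ.val⟫ : ℝ)| ≤ ‖μ‖ * ‖γ.val‖ := abs_real_inner_le_norm μ γ.val
        _ ≤ c * ‖γ.val‖ := mul_le_mul_of_nonneg_right hnorm (norm_nonneg _)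
    have hkb : |k| ≤ Int.ceil (c * ‖γ.val‖) := by
      have : ((|k| : ℤ) : ℝ) ≤ ((Int.ceil (c * ‖γ.val‖) : ℤ) : ℝ) :=
        le_trans (by push_cast; exact habs) (Int.le_ceil _)
      exact_mod_cast this
    simp only [hr, Set.mem_Icc]
    exact abs_le.mp hkb
  · intro μ hμ μ' hμ' hf
    have heq : ∀ γ ∈ D.Φ, (⟪μ, γ⟫ : ℝ) = ⟪μ', γ⟫ := by
      intro γ hγ
      obtain ⟨k, hk⟩ := hμ.1 γ hγ
      obtain ⟨k', hk'⟩ := hμ'.1 γ hγ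
      have := congrFun hf ⟨γ, hΦ.mem_toFinset.mpr hγ⟩
      simp only [hk, hk', round_intCast] at this
      rw [hk, hk', this]
    have hsub : μ - μ' = 0 := by
      apply inner_zero_span D
      intro γ hγ
      rw [inner_sub_left, heq γ hγ, sub_self]
    exact sub_eq_zero.mp hsub

end Aux5
section Main
open RootSystemData
variable {n : ℕ} (D : RootSystemData n)

local notation "V" => Euc n
local notation "AA" => (Euc n ≃ᵃ[ℝ] Euc n)

lemma coroot_hr_ne : coroot n D.highestRoot ≠ 0 := by
  have hθ := hhr_ne D
  have hq := inner_self_ne D.highestRoot hθ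
  rw [coroot]
  exact smul_ne_zero (div_ne_zero two_ne_zero hq) hθ

lemma exists_good_j (x x₁ : ℝ) (hx₁ : x₁ ≠ 0) :
    ∃ j : ℤ, (j : ℝ) * x₁ ≠ x ∧ |(j : ℝ) * x₁ - x| ≤ |x₁| := by
  set j0 := round (x / x₁) with hj0
  by_cases h : (j0 : ℝ) * x₁ = x
  · refine ⟨j0 + 1, ?_, ?_⟩
    · push_cast
      intro hc
      apply hx₁
      nlinarith [hc, h]
    · push_cast
      rw [show ((j0 : ℝ) + 1) * x₁ - x = (j0 : ℝ) * x₁ - x + x₁ by ring, h]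
      simp
  · refine ⟨j0, h, ?_⟩
    have h1 : |x / x₁ - ((j0 : ℤ) : ℝ)| ≤ 1 / 2 := by
      exact abs_sub_round (x / x₁)
    have h2 : (j0 : ℝ) * x₁ - x = -((x / x₁ - ((j0 : ℤ) : ℝ)) * x₁) := by field_simp; ring
    rw [h2, abs_neg, abs_mul]
    calc |x / x₁ - ((j0 : ℤ) : ℝ)| * |x₁| ≤ (1 / 2) * |x₁| :=
          mul_le_mul_of_nonneg_right h1 (abs_nonneg _)
      _ ≤ |x₁| := by nlinarith [abs_nonneg x₁]

set_option maxHeartbeats 1000000 in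
lemma fiber_finite (W' : Subgroup AA) (L : V ≃ₗ[ℝ] V) :
    Set.Finite {t : AA | (t ∈ D.Refls ∧
      {r | r ∈ D.Refls ∧ D.len (r * t) < D.len t} ∩ (W' : Set AA) = {t}) ∧
      t.linear = L} := by
  classical
  set F := {t : AA | (t ∈ D.Refls ∧
      {r | r ∈ D.Refls ∧ D.len (r * t) < D.len t} ∩ (W' : Set AA) = {t}) ∧
      t.linear = L} with hF
  by_contra hinf
  -- basic facts about members of F
  have hmemW' : ∀ t ∈ F, t ∈ W' := by
    intro t ht
    have h1 : t ∈ ({t} : Set AA) := rfl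
    rw [← ht.1.2] at h1
    exact h1.2
  have hmemR : ∀ t ∈ F, t ∈ D.Refls := fun t ht => ht.1.1
  have hmemA : ∀ t ∈ F, t ∈ D.AffW := fun t ht => refls_mem_affW D (hmemR t ht)
  -- pick two distinct elements
  have hinf' : F.Infinite := hinf
  obtain ⟨t₀, ht₀⟩ := hinf'.nonempty
  obtain ⟨t₁, ht₁'⟩ := (hinf'.diff (Set.finite_singleton t₀)).nonempty
  have ht₁ : t₁ ∈ F := ht₁'.1
  have ht₁ne : t₁ ≠ t₀ := fun h => ht₁'.2 (by simp [h])
  have ht₀lin : t₀.linear = L := ht₀.2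
  have ht₀sq : t₀ * t₀ = 1 := refls_sq D t₀ (hmemR t₀ ht₀)
  have hLL : ∀ v : V, L (L v) = v := by
    intro v
    have h1 : (t₀ * t₀).linear = 1 := by rw [ht₀sq]; rfl
    have h2 : (t₀ * t₀).linear v = L (L v) := by rw [← ht₀lin]; rfl
    rw [h1] at h2
    simpa using h2.symm
  set μ : (Euc n ≃ᵃ[ℝ] Euc n) → V := fun t => (t * t₀) 0 with hμdef
  have hkey : ∀ t ∈ F, t * t₀ = trn (μ t) := by
    intro t ht
    apply eq_trn_of_linear_eq_one
    refine LinearEquiv.ext fun v => ?_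
    have h1 : (t * t₀).linear v = t.linear (t₀.linear v) := rfl
    rw [h1, ht.2, ht₀lin]
    exact hLL v
  have hteq : ∀ t ∈ F, t = trn (μ t) * t₀ := by
    intro t ht
    have h := congrArg (fun w => w * t₀) (hkey t ht)
    simpa [mul_assoc, ht₀sq] using h
  have hLμ : ∀ t ∈ F, L (μ t) = -(μ t) := by
    intro t ht
    have hti : t⁻¹ = t := refls_inv D t (hmemR t ht)
    have ht₀i : t₀⁻¹ = t₀ := refls_inv D t₀ (hmemR t₀ ht₀)
    have e1 : t₀ * (t * t₀) * t₀⁻¹ = trn (t₀.linear (μ t)) := by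
      rw [hkey t ht]; exact conj_trn t₀ (μ t)
    have e2 : t₀ * (t * t₀) * t₀⁻¹ = (t * t₀)⁻¹ := by
      have h3 : t₀ * (t * t₀) * t₀⁻¹ = t₀ * t := by group
      rw [h3, mul_inv_rev, hti, ht₀i]
    have e3 : trn (L (μ t)) = trn (-(μ t)) := by
      rw [← ht₀lin, ← e1, e2, hkey t ht, ← trn_neg]
    exact trn_inj e3
  obtain ⟨γ, hγ0, heig⟩ := refls_eig D t₀ (hmemR t₀ ht₀)
  have heig' : ∀ v : V, L v = -v → ∃ x : ℝ, v = x • γ := fun v hv =>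
    heig v (by rw [ht₀lin]; exact hv)
  have hx : ∀ t ∈ F, ∃ x : ℝ, μ t = x • γ := fun t ht => heig' _ (hLμ t ht)
  have hμint : ∀ t ∈ F, ∀ γ' ∈ D.Φ, ∃ k : ℤ, ⟪μ t, γ'⟫ = (k : ℝ) := by
    intro t ht
    exact (affW_le_good D (mul_mem (hmemA t ht) (hmemA t₀ ht₀))).2.2.2
  have hμinj : ∀ t ∈ F, ∀ t' ∈ F, μ t = μ t' → t = t' := by
    intro t ht t' ht' h
    rw [hteq t ht, hteq t' ht', h]
  have hμ₁ : μ t₁ ≠ 0 := by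
    intro h
    apply ht₁ne
    apply hμinj t₁ ht₁ t₀ ht₀
    rw [h]
    show (0 : V) = (t₀ * t₀) 0
    rw [ht₀sq]; rfl
  obtain ⟨x₁, hx₁⟩ := hx t₁ ht₁
  have hx₁0 : x₁ ≠ 0 := fun h => hμ₁ (by rw [hx₁, h, zero_smul])
  have hball := finite_ball D ‖μ t₁‖
  set C := hball.toFinset.sup (fun d => D.len (trn d)) with hC
  set θc := coroot n D.highestRoot with hθc
  have hθcn : 0 < ‖θc‖ := norm_pos_iff.mpr (coroot_hr_ne D)
  obtain ⟨t, ht, hbig⟩ : ∃ t ∈ F, ((C : ℝ) + 1) * ‖θc‖ + ‖t₀ 0‖ < ‖μ t‖ := by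
    by_contra hc
    push_neg at hc
    apply hinf'
    apply Set.Finite.of_finite_image (f := μ)
    · apply Set.Finite.subset (finite_ball D (((C : ℝ) + 1) * ‖θc‖ + ‖t₀ 0‖))
      rintro y ⟨t, ht, rfl⟩
      exact ⟨hμint t ht, hc t ht⟩
    · intro p hp q hq hpq; exact hμinj p hp q hq hpq
  have htlen : C < D.len t := by
    have h1 := len_lower D t (hmemA t ht)
    have h2 : t 0 = μ t + t₀ 0 := by
      conv_lhs => rw [hteq t ht]
      rw [mul_apply, trn_apply]
    have h2' : μ t = t 0 - t₀ 0 := by rw [h2]; abel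
    have h3 : ‖μ t‖ ≤ ‖t 0‖ + ‖t₀ 0‖ := by
      rw [h2']; exact norm_sub_le _ _
    have h4 : ((C : ℝ) + 1) * ‖θc‖ < (D.len t : ℝ) * ‖θc‖ := by linarith
    have h5 : ((C : ℝ)) < (D.len t : ℝ) := by nlinarith
    exact_mod_cast h5
  obtain ⟨x, hxt⟩ := hx t ht
  obtain ⟨j, hj1, hj2⟩ := exists_good_j x x₁ hx₁0
  set a : V := (j : ℝ) • μ t₁ with hadef
  have hLa2 : ∀ c : ℝ, L (c • μ t₁) = -(c • μ t₁) := by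
    intro c; rw [map_smul, hLμ t₁ ht₁, smul_neg]
  have htrnt₁ : trn (μ t₁) = t₁ * t₀ := (hkey t₁ ht₁).symm
  have htrnsc : ∀ m : ℤ, trn ((m : ℝ) • μ t₁) = (t₁ * t₀) ^ m := by
    intro m
    rw [Int.cast_smul_eq_zsmul, trn_zsmul, htrnt₁]
  set r : (Euc n ≃ᵃ[ℝ] Euc n) := trn a * t₀ with hrdef
  have hrW : r ∈ W' := by
    rw [hrdef, hadef, htrnsc j]
    exact mul_mem (zpow_mem (mul_mem (hmemW' t₁ ht₁) (hmemW' t₀ ht₀)) j) (hmemW' t₀ ht₀)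
  have hrA : r ∈ D.AffW := by
    rw [hrdef, hadef, htrnsc j]
    exact mul_mem (zpow_mem (mul_mem (hmemA t₁ ht₁) (hmemA t₀ ht₀)) j) (hmemA t₀ ht₀)
  have hconj : ∀ (b : V), L b = -b → ∀ t' ∈ F,
      trn b * t' * (trn b)⁻¹ = trn (b + b) * t' := by
    intro b hb t' ht'
    have h1 : t' * trn (-b) * t'⁻¹ = trn (t'.linear (-b)) := conj_trn t' (-b)
    have h2 : t'.linear (-b) = b := by
      have : t'.linear (-b) = L (-b) := by rw [ht'.2]
      rw [this, map_neg, hb, neg_neg]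
    calc trn b * t' * (trn b)⁻¹ = trn b * (t' * (trn b)⁻¹ * t'⁻¹) * t' := by group
      _ = trn b * trn b * t' := by rw [← trn_neg, h1, h2]
      _ = trn (b + b) * t' := by rw [← trn_add]
  have htrnA : ∀ m : ℤ, trn ((m : ℝ) • μ t₁) ∈ D.AffW := by
    intro m
    rw [htrnsc m]
    exact zpow_mem (mul_mem (hmemA t₁ ht₁) (hmemA t₀ ht₀)) m
  have hrR : r ∈ D.Refls := by
    rcases Int.even_or_odd j with ⟨m, hm⟩ | ⟨m, hm⟩
    · have hasplit : a = (m : ℝ) • μ t₁ + (m : ℝ) • μ t₁ := by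
        rw [hadef, hm]; push_cast; rw [add_smul]
      have hcj := hconj ((m : ℝ) • μ t₁) (hLa2 (m : ℝ)) t₀ ht₀
      rw [hrdef, hasplit, ← hcj]
      exact refls_conj D _ (htrnA m) t₀ (hmemR t₀ ht₀)
    · have hasplit : a = ((m : ℝ) • μ t₁ + (m : ℝ) • μ t₁) + μ t₁ := by
        rw [hadef, hm]; push_cast; module
      have hstep : r = trn ((m : ℝ) • μ t₁ + (m : ℝ) • μ t₁) * t₁ := by
        rw [hrdef, hasplit, trn_add, mul_assoc, htrnt₁, mul_assoc, ht₀sq, mul_one]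
      have hcj := hconj ((m : ℝ) • μ t₁) (hLa2 (m : ℝ)) t₁ ht₁
      rw [hstep, ← hcj]
      exact refls_conj D _ (htrnA m) t₁ (hmemR t₁ ht₁)
  have hrneq : r ≠ t := by
    intro h
    apply hj1
    have h2 : trn a * t₀ = trn (μ t) * t₀ := by rw [← hrdef, h]; exact hteq t ht
    have h3 : a = μ t := trn_inj (mul_right_cancel h2)
    rw [hadef, hx₁, hxt, smul_smul] at h3
    have h4 : ((j : ℝ) * x₁ - x) • γ = 0 := by rw [sub_smul, h3, sub_self]
    rcases smul_eq_zero.mp h4 with h5 | h5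
    · exact sub_eq_zero.mp h5
    · exact absurd h5 hγ0
  have ht₀linμ : t₀.linear (μ t) = -(μ t) := by rw [ht₀lin]; exact hLμ t ht
  have hrt : r * t = trn (a - μ t) := by
    calc r * t = trn a * (t₀ * trn (μ t) * t₀⁻¹) * (t₀ * t₀) := by
          conv_lhs => rw [hrdef, hteq t ht]
          group
      _ = trn a * trn (t₀.linear (μ t)) * 1 := by rw [conj_trn, ht₀sq]
      _ = trn (a + -(μ t)) := by rw [ht₀linμ, mul_one, ← trn_add]
      _ = trn (a - μ t) := by rw [sub_eq_add_neg]
  have hdball : (a - μ t) ∈ hball.toFinset := by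
    rw [Set.Finite.mem_toFinset]
    constructor
    · have h0 : (r * t) 0 = a - μ t := by rw [hrt, trn_apply, add_zero]
      have hrtA : r * t ∈ D.AffW := mul_mem hrA (hmemA t ht)
      intro γ' hγ'
      have h6 := (affW_le_good D hrtA).2.2.2 γ' hγ'
      rwa [h0] at h6
    · have h7 : a - μ t = ((j : ℝ) * x₁ - x) • γ := by
        rw [hadef, hx₁, hxt, smul_smul, sub_smul]
      rw [h7, norm_smul, Real.norm_eq_abs, hx₁, norm_smul, Real.norm_eq_abs]
      exact mul_le_mul_of_nonneg_right hj2 (norm_nonneg γ)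
  have hlenrt : D.len (r * t) ≤ C := by
    rw [hrt]
    exact Finset.le_sup (f := fun d => D.len (trn d)) hdball
  have hrmem : r ∈ {r | r ∈ D.Refls ∧ D.len (r * t) < D.len t} ∩
      (W' : Set (Euc n ≃ᵃ[ℝ] Euc n)) :=
    ⟨⟨hrR, lt_of_le_of_lt hlenrt htlen⟩, hrW⟩
  rw [ht.1.2] at hrmem
  exact hrneq hrmem


end Main
end RootSystemData


open RootSystemData in
/-- every reflection subgroup of an affine Weyl group has a finite set
of canonical (Dyer) generators `{t ∈ T̃ : N(t) ∩ W′ = {t}}`. -/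
theorem canonical_generators_finite (n : ℕ) (D : RootSystemData n)
    (W' : Subgroup (Euc n ≃ᵃ[ℝ] Euc n)) (hle : W' ≤ D.AffW)
    (hrefl : ∃ R ⊆ D.Refls, W' = Subgroup.closure R) :
    Set.Finite {t : Euc n ≃ᵃ[ℝ] Euc n | t ∈ D.Refls ∧
      {r | r ∈ D.Refls ∧ D.len (r * t) < D.len t} ∩ (W' : Set (Euc n ≃ᵃ[ℝ] Euc n)) = {t}} := by
  classical
  have hsub : {t : Euc n ≃ᵃ[ℝ] Euc n | t ∈ D.Refls ∧
      {r | r ∈ D.Refls ∧ D.len (r * t) < D.len t} ∩ (W' : Set (Euc n ≃ᵃ[ℝ] Euc n)) = {t}} ⊆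
      ⋃ L ∈ {L : Euc n ≃ₗ[ℝ] Euc n | ∀ β ∈ D.Φ, L β ∈ D.Φ},
      {t : Euc n ≃ᵃ[ℝ] Euc n | (t ∈ D.Refls ∧
        {r | r ∈ D.Refls ∧ D.len (r * t) < D.len t} ∩ (W' : Set (Euc n ≃ᵃ[ℝ] Euc n)) = {t})
        ∧ t.linear = L} := by
    intro t htS
    have hA : t ∈ D.AffW := refls_mem_affW D htS.1
    have hgood := (affW_le_good D hA).2.1
    exact Set.mem_biUnion hgood ⟨htS, rfl⟩
  exact Set.Finite.subset
    (Set.Finite.biUnion (finite_linear D) (fun L _ => fiber_finite D W' L)) hsub
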